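/- For every μ > 1 and N ∈ ℕ, the function V_N(x) = Σ_k (1/4)(x_k² − 1)² + (1/2)⟨x, Kx⟩ on ℝ^N has exactly three critical points: the two global minimum points I₊ = (1,…,1) and I₋ = (−1,…,−1), and the origin O = (0,…,0). -/

import Mathlib

open Real Finset
noncomputable section

/-- The normalized discrete Laplacian with periodic boundary conditions. -/
def Kd (μ : ℝ) (N : ℕ) (hN : N ≠ 0) (x : Fin N → ℝ) : Fin N → ℝ :=
  haveI : NeZero N := ⟨hN⟩
  fun k => μ / (4 * Real.sin (π / N) ^ 2) * (2 * x k - x (k + 1) - x (k - 1))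

/-- The double-well energy `V_N(x) = ∑ₖ (1/4)(xₖ²−1)² + (1/2)⟨x, Kx⟩`. -/
def V (μ : ℝ) (N : ℕ) (hN : N ≠ 0) (x : Fin N → ℝ) : ℝ :=
  ∑ k, (1 / 4 : ℝ) * (x k ^ 2 - 1) ^ 2 + (1 / 2 : ℝ) * ∑ k, x k * Kd μ N hN x k

namespace Stmt6Aux

variable {N : ℕ}

lemma sum_shift [NeZero N] {M : Type*} [AddCommMonoid M] (f : Fin N → M) (a : Fin N) :
    ∑ k, f (k + a) = ∑ k, f k :=
  Fintype.sum_equiv (Equiv.addRight a) _ _ fun _ => rfl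

/-- The root of unity character. -/
def e (N : ℕ) (m : ℤ) : ℂ := Complex.exp (2 * (π : ℂ) * Complex.I * m / N)

lemma e_add (a b : ℤ) : e N (a + b) = e N a * e N b := by
  rw [e, e, e, ← Complex.exp_add]
  congr 1
  push_cast
  ring

lemma e_zero : e N 0 = 1 := by simp [e]

lemma e_mul_natCast (hN : N ≠ 0) (m : ℤ) : e N (m * N) = 1 := by
  rw [e]
  have hNne : (N : ℂ) ≠ 0 := Nat.cast_ne_zero.2 hN
  have : 2 * (π : ℂ) * Complex.I * ((m * N : ℤ) : ℂ) / N = m * (2 * π * Complex.I) := by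
    push_cast; field_simp
  rw [this, Complex.exp_int_mul_two_pi_mul_I]

lemma e_congr (hN : N ≠ 0) {a b : ℤ} (h : (N : ℤ) ∣ (a - b)) : e N a = e N b := by
  obtain ⟨t, ht⟩ := h
  have : a = b + t * N := by linarith [ht]
  rw [this, e_add, e_mul_natCast hN, mul_one]

lemma e_eq_one_iff (hN : N ≠ 0) {m : ℤ} : e N m = 1 ↔ (N : ℤ) ∣ m := by
  constructor
  · intro h
    rw [e, Complex.exp_eq_one_iff] at h
    obtain ⟨n, hn⟩ := h
    have hNne : (N : ℂ) ≠ 0 := Nat.cast_ne_zero.2 hN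
    have hI : (2 : ℂ) * π * Complex.I ≠ 0 := by
      simp [Real.pi_ne_zero, Complex.I_ne_zero, Complex.ofReal_ne_zero]
    have : (m : ℂ) = n * N := by
      field_simp at hn
      have := hn
      -- hn : 2 * π * I * m = n * (2 * π * I) * N
      have h2 : (2 : ℂ) * π * Complex.I * m = 2 * π * Complex.I * (n * N) := by
        rw [hn]; ring
      exact mul_left_cancel₀ hI h2
    exact ⟨n, by exact_mod_cast this.trans (mul_comm _ _)⟩
  · intro ⟨t, ht⟩
    rw [ht, mul_comm, e_mul_natCast hN]

lemma e_pow (hN : N ≠ 0) (m : ℤ) (j : ℕ) : e N (j * m) = (e N m) ^ j := by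
  induction j with
  | zero => simp [e_zero]
  | succ n ih => rw [pow_succ, ← ih, ← e_add]; congr 1; push_cast; ring

lemma orthogonality (hN : N ≠ 0) (m : ℤ) :
    ∑ j : Fin N, e N (j * m) = if (N : ℤ) ∣ m then (N : ℂ) else 0 := by
  have h : ∀ j : Fin N, e N ((j : ℕ) * m) = (e N m) ^ (j : ℕ) := fun j => e_pow hN m j
  rw [Fintype.sum_congr _ _ h]
  rw [Fin.sum_univ_eq_sum_range (fun i => (e N m) ^ i)]
  by_cases hd : (N : ℤ) ∣ m
  · rw [if_pos hd]
    have : e N m = 1 := (e_eq_one_iff hN).2 hd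
    simp [this]
  · rw [if_neg hd]
    have hne : e N m ≠ 1 := fun h => hd ((e_eq_one_iff hN).1 h)
    rw [geom_sum_eq hne]
    have : (e N m) ^ N = 1 := by
      rw [← e_pow hN m N, mul_comm, e_mul_natCast hN]
    rw [this, sub_self, zero_div]


lemma e_conj (m : ℤ) : (starRingEnd ℂ) (e N m) = e N (-m) := by
  rw [e, e, ← Complex.exp_conj]
  congr 1
  simp only [map_div₀, map_mul, Complex.conj_I, map_ofNat, Complex.conj_ofReal,
    map_intCast, map_natCast]
  push_cast
  ring

lemma fin_dvd_iff (hN : N ≠ 0) (k l : Fin N) : (N : ℤ) ∣ ((k : ℤ) - (l : ℤ)) ↔ k = l := by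
  constructor
  · intro h
    have h1 : |((k : ℤ) - (l : ℤ))| < N := by
      rw [abs_sub_lt_iff]
      constructor <;> [skip; skip] <;>
        · have := k.isLt; have := l.isLt
          omega
    have := Int.eq_zero_of_abs_lt_dvd h h1
    have : (k : ℤ) = (l : ℤ) := by omega
    exact Fin.ext (by exact_mod_cast this)
  · rintro rfl; simp

/-- Discrete Fourier transform. -/
def ft (N : ℕ) (y : Fin N → ℝ) (j : Fin N) : ℂ :=
  ∑ k : Fin N, (y k : ℂ) * e N ((j : ℕ) * (k : ℕ))

lemma parseval (hN : N ≠ 0) (y : Fin N → ℝ) :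
    ∑ j, Complex.normSq (ft N y j) = N * ∑ k, (y k) ^ 2 := by
  have key : ∑ j : Fin N, ft N y j * (starRingEnd ℂ) (ft N y j)
      = (N : ℂ) * ∑ k, ((y k : ℂ)) ^ 2 := by
    have expand : ∀ j : Fin N, ft N y j * (starRingEnd ℂ) (ft N y j)
        = ∑ k : Fin N, ∑ l : Fin N, (y k : ℂ) * (y l : ℂ) * e N ((j : ℕ) * ((k : ℤ) - (l : ℤ))) := by
      intro j
      rw [ft, map_sum, Finset.sum_mul_sum]
      refine Finset.sum_congr rfl fun k _ => Finset.sum_congr rfl fun l _ => ?_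
      rw [map_mul, Complex.conj_ofReal, e_conj]
      rw [mul_mul_mul_comm, ← e_add]
      congr 2
      push_cast
      ring
    rw [Fintype.sum_congr _ _ expand, Finset.sum_comm]
    have swap2 : ∑ k : Fin N, ∑ j : Fin N, ∑ l : Fin N,
          (y k : ℂ) * (y l : ℂ) * e N ((j : ℕ) * ((k : ℤ) - (l : ℤ)))
        = ∑ k : Fin N, ∑ l : Fin N, ∑ j : Fin N,
          (y k : ℂ) * (y l : ℂ) * e N ((j : ℕ) * ((k : ℤ) - (l : ℤ))) :=
      Finset.sum_congr rfl fun k _ => Finset.sum_comm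
    rw [swap2]
    have inner : ∀ k : Fin N, ∑ l : Fin N, ∑ j : Fin N,
          (y k : ℂ) * (y l : ℂ) * e N ((j : ℕ) * ((k : ℤ) - (l : ℤ)))
        = (y k : ℂ) ^ 2 * N := by
      intro k
      have step : ∀ l : Fin N, ∑ j : Fin N,
            (y k : ℂ) * (y l : ℂ) * e N ((j : ℕ) * ((k : ℤ) - (l : ℤ)))
          = if l = k then (y k : ℂ) ^ 2 * N else 0 := by
        intro l
        rw [← Finset.mul_sum, orthogonality hN]
        by_cases h : l = k
        · subst h
          rw [if_pos (by simp), if_pos rfl]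
          ring
        · rw [if_neg (fun hh => h ((fin_dvd_iff hN k l).1 hh).symm), mul_zero, if_neg h]
      rw [Fintype.sum_congr _ _ step]
      simp
    rw [Fintype.sum_congr _ _ inner, ← Finset.sum_mul]
    ring
  have key2 : ((∑ j, Complex.normSq (ft N y j) : ℝ) : ℂ) = (((N : ℝ) * ∑ k, (y k) ^ 2 : ℝ) : ℂ) := by
    push_cast
    rw [← key]
    exact Finset.sum_congr rfl fun j _ => (Complex.mul_conj _).symm
  exact_mod_cast key2


lemma val_succ_modEq [NeZero N] (k : Fin N) :
    ((k + 1 : Fin N) : ℕ) ≡ (k : ℕ) + 1 [MOD N] := by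
  rw [Fin.val_add, Fin.val_one']
  calc ((k : ℕ) + 1 % N) % N ≡ (k : ℕ) + 1 % N [MOD N] := Nat.mod_modEq _ _
    _ ≡ (k : ℕ) + 1 [MOD N] := Nat.ModEq.add_left _ (Nat.mod_modEq _ _)

lemma e_mul_shift (hN : N ≠ 0) [NeZero N] (j k : Fin N) :
    e N ((j : ℕ) * (k : ℕ)) = e N ((j : ℕ) * ((k + 1 : Fin N) : ℕ)) * e N (-(j : ℕ)) := by
  rw [← e_add]
  apply e_congr hN
  have hd : (N : ℤ) ∣ ((k : ℕ) + 1 : ℤ) - (((k + 1 : Fin N) : ℕ) : ℤ) := by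
    have := (val_succ_modEq k).dvd
    push_cast at this ⊢
    exact this
  obtain ⟨t, ht⟩ := hd
  refine ⟨(j : ℕ) * t, ?_⟩
  have : ((j : ℕ) : ℤ) * (((k : ℕ) + 1 : ℤ) - (((k + 1 : Fin N) : ℕ) : ℤ)) = (j : ℕ) * (N * t) := by
    rw [← ht]
  push_cast at this ⊢
  linarith [this]

lemma ft_diff (hN : N ≠ 0) [NeZero N] (y : Fin N → ℝ) (j : Fin N) :
    ft N (fun k => y k - y (k + 1)) j = (1 - e N (-(j : ℕ))) * ft N y j := by
  have h2 : ∑ k : Fin N, (y (k + 1) : ℂ) * e N ((j : ℕ) * (k : ℕ))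
      = e N (-(j : ℕ)) * ft N y j := by
    calc ∑ k : Fin N, (y (k + 1) : ℂ) * e N ((j : ℕ) * (k : ℕ))
        = ∑ k : Fin N, ((y (k + 1) : ℂ) * e N ((j : ℕ) * ((k + 1 : Fin N) : ℕ))) * e N (-(j : ℕ)) := by
          refine Finset.sum_congr rfl fun k _ => ?_
          rw [e_mul_shift hN j k]; ring
      _ = (∑ k : Fin N, (y (k + 1) : ℂ) * e N ((j : ℕ) * ((k + 1 : Fin N) : ℕ))) * e N (-(j : ℕ)) := by
          rw [Finset.sum_mul]
      _ = (∑ k : Fin N, (y k : ℂ) * e N ((j : ℕ) * ((k : Fin N) : ℕ))) * e N (-(j : ℕ)) := by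
          rw [sum_shift (fun k : Fin N => (y k : ℂ) * e N ((j : ℕ) * (k : ℕ))) 1]
      _ = e N (-(j : ℕ)) * ft N y j := by rw [ft]; ring
  rw [ft]
  push_cast
  simp only [sub_mul]
  rw [Finset.sum_sub_distrib, h2, ft]
  ring

lemma normSq_one_sub_e [NeZero N] (j : Fin N) :
    Complex.normSq (1 - e N (-(j : ℕ))) = 4 * Real.sin (π * j / N) ^ 2 := by
  have hrw : e N (-(j : ℕ)) = Complex.exp (((-(2 * π * j / N) : ℝ) : ℂ) * Complex.I) := by
    rw [e]; congr 1; push_cast; ring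
  rw [hrw, Complex.normSq_apply]
  simp only [Complex.sub_re, Complex.sub_im, Complex.one_re, Complex.one_im,
    Complex.exp_ofReal_mul_I_re, Complex.exp_ofReal_mul_I_im]
  have hc : Real.cos (-(2 * π * j / N)) = Real.cos (2 * (π * j / N)) := by
    rw [Real.cos_neg]; ring_nf
  have hs : Real.sin (-(2 * π * j / N)) ^ 2 = Real.sin (2 * (π * j / N)) ^ 2 := by
    rw [Real.sin_neg]; ring_nf
  set φ := π * j / N
  nlinarith [Real.sin_sq_add_cos_sq φ, Real.cos_two_mul φ, Real.sin_sq_add_cos_sq (2 * φ), hc, hs]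

lemma sin_mono_aux (hN2 : 2 ≤ N) {t : ℕ} (h1 : 1 ≤ t) (h2 : 2 * t ≤ N) :
    Real.sin (π / N) ≤ Real.sin (π * t / N) := by
  have hNpos : (0 : ℝ) < N := by positivity
  apply Real.sin_le_sin_of_le_of_le_pi_div_two
  · have : (0 : ℝ) < π / N := by positivity
    linarith [Real.pi_pos]
  · rw [div_le_iff₀ hNpos]  -- π * t / N ≤ π/2
    have : (2 : ℝ) * t ≤ N := by exact_mod_cast h2
    nlinarith [Real.pi_pos]
  · rw [div_le_div_iff₀ hNpos hNpos]
    have : (1 : ℝ) ≤ t := by exact_mod_cast h1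
    nlinarith [mul_pos Real.pi_pos hNpos]

lemma sin_sq_ge [NeZero N] (j : Fin N) (hj : j ≠ 0) :
    Real.sin (π / N) ^ 2 ≤ Real.sin (π * j / N) ^ 2 := by
  have hN1 : 1 ≤ (j : ℕ) := Nat.one_le_iff_ne_zero.2 (fun h => hj (Fin.ext (by simp [h])))
  have hjN : (j : ℕ) < N := j.isLt
  have hN2 : 2 ≤ N := by omega
  have hNpos : (0 : ℝ) < N := by positivity
  have hsin1 : 0 ≤ Real.sin (π / N) := by
    apply Real.sin_nonneg_of_nonneg_of_le_pi
    · positivity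
    · rw [div_le_iff₀ hNpos]
      have h1N : (1 : ℝ) ≤ N := by exact_mod_cast (by omega : 1 ≤ N)
      nlinarith [Real.pi_pos]
  have key : Real.sin (π / N) ≤ Real.sin (π * j / N) := by
    by_cases hc : 2 * (j : ℕ) ≤ N
    · exact sin_mono_aux hN2 hN1 hc
    · have heq : Real.sin (π * j / N) = Real.sin (π * ((N - (j : ℕ) : ℕ)) / N) := by
        rw [← Real.sin_pi_sub]
        congr 1
        have : ((N - (j : ℕ) : ℕ) : ℝ) = (N : ℝ) - (j : ℕ) := by
          push_cast [Nat.cast_sub hjN.le]; ring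
        rw [this]
        field_simp
      rw [heq]
      exact sin_mono_aux hN2 (by omega) (by omega)
  nlinarith [key, hsin1]

lemma wirtinger (hN : N ≠ 0) [NeZero N] (y : Fin N → ℝ) (h0 : ∑ k, y k = 0) :
    4 * Real.sin (π / N) ^ 2 * ∑ k, (y k) ^ 2 ≤ ∑ k, (y k - y (k + 1)) ^ 2 := by
  have hNpos : (0 : ℝ) < N := by positivity
  have hP1 := parseval hN y
  have hP2 := parseval hN (fun k => y k - y (k + 1))
  have hY0 : ft N y 0 = 0 := by
    have hterm : ∀ k : Fin N, (y k : ℂ) * e N (((0 : Fin N) : ℕ) * (k : ℕ)) = (y k : ℂ) := by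
      intro k
      simp [e_zero]
    rw [ft, Fintype.sum_congr _ _ hterm, ← Complex.ofReal_sum, h0, Complex.ofReal_zero]
  have termwise : ∀ j : Fin N,
      4 * Real.sin (π / N) ^ 2 * Complex.normSq (ft N y j)
        ≤ Complex.normSq (ft N (fun k => y k - y (k + 1)) j) := by
    intro j
    rw [ft_diff hN, Complex.normSq_mul, normSq_one_sub_e]
    by_cases hj : j = 0
    · subst hj
      rw [hY0]
      simp
    · have h1 := sin_sq_ge j hj
      have h2 := Complex.normSq_nonneg (ft N y j)
      nlinarith
  have hsum := Finset.sum_le_sum (fun j (_ : j ∈ Finset.univ) => termwise j)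
  rw [← Finset.mul_sum, hP1, hP2] at hsum
  have : (N : ℝ) * (4 * Real.sin (π / N) ^ 2 * ∑ k, (y k) ^ 2)
      ≤ (N : ℝ) * ∑ k, (y k - y (k + 1)) ^ 2 := by linarith
  exact le_of_mul_le_mul_left this hNpos


lemma sum_symm [NeZero N] (x v : Fin N → ℝ) :
    ∑ k, (2 * x k - x (k + 1) - x (k - 1)) * v k
      = ∑ k, x k * (2 * v k - v (k + 1) - v (k - 1)) := by
  have h1 : ∑ k : Fin N, x (k + 1) * v k = ∑ k : Fin N, x k * v (k - 1) := by
    have := sum_shift (fun k : Fin N => x k * v (k - 1)) 1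
    simpa using this
  have h2 : ∑ k : Fin N, x (k - 1) * v k = ∑ k : Fin N, x k * v (k + 1) := by
    have := sum_shift (fun k : Fin N => x k * v (k + 1)) (-1)
    simpa [sub_eq_add_neg] using this
  have hL : ∑ k : Fin N, (2 * x k - x (k + 1) - x (k - 1)) * v k
      = 2 * ∑ k : Fin N, x k * v k - ∑ k : Fin N, x (k + 1) * v k
        - ∑ k : Fin N, x (k - 1) * v k := by
    rw [Finset.mul_sum, ← Finset.sum_sub_distrib, ← Finset.sum_sub_distrib]
    exact Finset.sum_congr rfl fun k _ => by ring
  have hR : ∑ k : Fin N, x k * (2 * v k - v (k + 1) - v (k - 1))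
      = 2 * ∑ k : Fin N, x k * v k - ∑ k : Fin N, x k * v (k + 1)
        - ∑ k : Fin N, x k * v (k - 1) := by
    rw [Finset.mul_sum, ← Finset.sum_sub_distrib, ← Finset.sum_sub_distrib]
    exact Finset.sum_congr rfl fun k _ => by ring
  rw [hL, hR, h1, h2]
  ring

lemma sum_self_interaction [NeZero N] (x : Fin N → ℝ) :
    ∑ k, x k * (2 * x k - x (k + 1) - x (k - 1)) = ∑ k, (x k - x (k + 1)) ^ 2 := by
  have h1 : ∑ k : Fin N, x (k + 1) * x k = ∑ k : Fin N, x k * x (k - 1) := by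
    have := sum_shift (fun k : Fin N => x k * x (k - 1)) 1
    simpa using this
  have h2 : ∑ k : Fin N, (x (k + 1)) ^ 2 = ∑ k : Fin N, (x k) ^ 2 := by
    have := sum_shift (fun k : Fin N => (x k) ^ 2) 1
    simpa using this
  have h3 : ∑ k : Fin N, x (k + 1) * x k = ∑ k : Fin N, x k * x (k + 1) :=
    Finset.sum_congr rfl fun k _ => mul_comm _ _
  have hL : ∑ k : Fin N, x k * (2 * x k - x (k + 1) - x (k - 1))
      = 2 * ∑ k : Fin N, (x k) ^ 2 - ∑ k : Fin N, x k * x (k + 1)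
        - ∑ k : Fin N, x k * x (k - 1) := by
    rw [Finset.mul_sum, ← Finset.sum_sub_distrib, ← Finset.sum_sub_distrib]
    exact Finset.sum_congr rfl fun k _ => by ring
  have hR : ∑ k : Fin N, (x k - x (k + 1)) ^ 2
      = ∑ k : Fin N, (x k) ^ 2 + ∑ k : Fin N, (x (k + 1)) ^ 2
        - 2 * ∑ k : Fin N, x k * x (k + 1) := by
    rw [Finset.mul_sum, ← Finset.sum_add_distrib, ← Finset.sum_sub_distrib]
    exact Finset.sum_congr rfl fun k _ => by ring
  rw [hL, hR, h2, ← h1, h3]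
  ring


lemma hasGradientAt_V (μ : ℝ) (hN : N ≠ 0) (x : EuclideanSpace ℝ (Fin N)) :
    haveI : NeZero N := ⟨hN⟩
    HasGradientAt (fun y : EuclideanSpace ℝ (Fin N) => V μ N hN y)
      (WithLp.toLp 2 (fun k => x k * (x k ^ 2 - 1) + Kd μ N hN x k : Fin N → ℝ) : EuclideanSpace ℝ (Fin N)) x := by
  haveI : NeZero N := ⟨hN⟩
  set c : ℝ := μ / (4 * Real.sin (π / N) ^ 2) with hc
  set P : Fin N → (EuclideanSpace ℝ (Fin N) →L[ℝ] ℝ) := fun k => EuclideanSpace.proj k with hP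
  have hproj : ∀ k : Fin N, HasFDerivAt (fun y : EuclideanSpace ℝ (Fin N) => y k) (P k) x :=
    fun k => (P k).hasFDerivAt
  have term1 : ∀ k : Fin N, HasFDerivAt (fun y : EuclideanSpace ℝ (Fin N) =>
      (1 / 4 : ℝ) * (y k ^ 2 - 1) ^ 2) ((x k ^ 3 - x k) • P k) x := by
    intro k
    have hd := ((((hasDerivAt_id' (x k)).fun_pow 2).sub_const 1).fun_pow 2).const_mul (1 / 4 : ℝ)
    have hd' : HasDerivAt (fun t : ℝ => (1 / 4 : ℝ) * (t ^ 2 - 1) ^ 2) (x k ^ 3 - x k) (x k) := by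
      exact hd.congr_deriv (by push_cast; ring)
    exact hd'.comp_hasFDerivAt (h₂ := fun t : ℝ => (1 / 4 : ℝ) * (t ^ 2 - 1) ^ 2) x (hproj k)
  have hw : ∀ k : Fin N, HasFDerivAt (fun y : EuclideanSpace ℝ (Fin N) =>
      c * (2 * y k - y (k + 1) - y (k - 1)))
      (c • ((2 : ℝ) • P k - P (k + 1) - P (k - 1))) x := by
    intro k
    have h2 : HasFDerivAt (fun y : EuclideanSpace ℝ (Fin N) => 2 * y k - y (k + 1) - y (k - 1))
        ((2 : ℝ) • P k - P (k + 1) - P (k - 1)) x :=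
      (((hproj k).const_mul 2).sub (hproj (k + 1))).sub (hproj (k - 1))
    exact h2.const_mul c
  have term2 : ∀ k : Fin N, HasFDerivAt (fun y : EuclideanSpace ℝ (Fin N) =>
      y k * (c * (2 * y k - y (k + 1) - y (k - 1))))
      (x k • (c • ((2 : ℝ) • P k - P (k + 1) - P (k - 1)))
        + (c * (2 * x k - x (k + 1) - x (k - 1))) • P k) x :=
    fun k => (hproj k).mul (hw k)
  have hsum1 : HasFDerivAt (fun y : EuclideanSpace ℝ (Fin N) =>
      ∑ k, (1 / 4 : ℝ) * (y k ^ 2 - 1) ^ 2) (∑ k, (x k ^ 3 - x k) • P k) x :=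
    HasFDerivAt.fun_sum fun k _ => term1 k
  have hsum2 : HasFDerivAt (fun y : EuclideanSpace ℝ (Fin N) =>
      ∑ k, y k * (c * (2 * y k - y (k + 1) - y (k - 1))))
      (∑ k, (x k • (c • ((2 : ℝ) • P k - P (k + 1) - P (k - 1)))
        + (c * (2 * x k - x (k + 1) - x (k - 1))) • P k)) x :=
    HasFDerivAt.fun_sum fun k _ => term2 k
  have htotal := hsum1.add (hsum2.const_mul (1 / 2 : ℝ))
  rw [hasGradientAt_iff_hasFDerivAt]
  have hD : (InnerProductSpace.toDual ℝ (EuclideanSpace ℝ (Fin N)))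
        (WithLp.toLp 2 (fun k => x k * (x k ^ 2 - 1) + Kd μ N hN x k : Fin N → ℝ) : EuclideanSpace ℝ (Fin N))
      = (∑ k, (x k ^ 3 - x k) • P k)
        + (1 / 2 : ℝ) • (∑ k, (x k • (c • ((2 : ℝ) • P k - P (k + 1) - P (k - 1)))
          + (c * (2 * x k - x (k + 1) - x (k - 1))) • P k)) := by
    apply ContinuousLinearMap.ext
    intro v
    have hlhs : (InnerProductSpace.toDual ℝ (EuclideanSpace ℝ (Fin N)))
          (WithLp.toLp 2 (fun k => x k * (x k ^ 2 - 1) + Kd μ N hN x k : Fin N → ℝ) : EuclideanSpace ℝ (Fin N)) v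
        = ∑ k, (x k * (x k ^ 2 - 1) + c * (2 * x k - x (k + 1) - x (k - 1))) * v k := by
      rw [InnerProductSpace.toDual_apply_apply]
      rw [PiLp.inner_apply]
      exact Finset.sum_congr rfl fun k _ => Real.inner_apply _ _
    rw [ContinuousLinearMap.add_apply, ContinuousLinearMap.smul_apply,
      ContinuousLinearMap.sum_apply, ContinuousLinearMap.sum_apply, hlhs]
    have hrhs1 : ∀ k : Fin N, ((x k ^ 3 - x k) • P k) v = (x k ^ 3 - x k) * v k := fun k => rfl
    have hrhs2 : ∀ k : Fin N, (x k • (c • ((2 : ℝ) • P k - P (k + 1) - P (k - 1)))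
          + (c * (2 * x k - x (k + 1) - x (k - 1))) • P k) v
        = x k * (c * (2 * v k - v (k + 1) - v (k - 1)))
          + (c * (2 * x k - x (k + 1) - x (k - 1))) * v k := by
      intro k
      rfl
    rw [Fintype.sum_congr _ _ hrhs1, Fintype.sum_congr _ _ hrhs2]
    have hswap : ∑ k : Fin N, x k * (2 * v k - v (k + 1) - v (k - 1))
        = ∑ k : Fin N, (2 * x k - x (k + 1) - x (k - 1)) * v k := (sum_symm x (fun k => v k)).symm
    have hsplit1 : ∑ k : Fin N, (x k * (x k ^ 2 - 1) + c * (2 * x k - x (k + 1) - x (k - 1))) * v k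
        = ∑ k : Fin N, (x k ^ 3 - x k) * v k
          + c * ∑ k : Fin N, (2 * x k - x (k + 1) - x (k - 1)) * v k := by
      rw [Finset.mul_sum, ← Finset.sum_add_distrib]
      exact Finset.sum_congr rfl fun k _ => by ring
    have hsplit2 : ∑ k : Fin N, (x k * (c * (2 * v k - v (k + 1) - v (k - 1)))
          + (c * (2 * x k - x (k + 1) - x (k - 1))) * v k)
        = c * ∑ k : Fin N, x k * (2 * v k - v (k + 1) - v (k - 1))
          + c * ∑ k : Fin N, (2 * x k - x (k + 1) - x (k - 1)) * v k := by
      rw [Finset.mul_sum, Finset.mul_sum, ← Finset.sum_add_distrib]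
      exact Finset.sum_congr rfl fun k _ => by ring
    rw [hsplit1, hsplit2, hswap, smul_eq_mul]
    ring
  rw [hD]
  exact htotal


lemma crit_eq (μ : ℝ) (hμ : 1 < μ) (hN : N ≠ 0) [NeZero N] (x : Fin N → ℝ)
    (hx : ∀ k, x k * (x k ^ 2 - 1) + Kd μ N hN x k = 0) :
    (∀ k, x k = 1) ∨ (∀ k, x k = -1) ∨ (∀ k, x k = 0) := by
  set c : ℝ := μ / (4 * Real.sin (π / N) ^ 2) with hc
  set m : ℝ := (∑ k, x k) / N with hm
  set y : Fin N → ℝ := fun k => x k - m with hy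
  have hNR : (0 : ℝ) < N := by positivity
  have h0 : ∑ k, y k = 0 := by
    simp only [hy]
    rw [Finset.sum_sub_distrib, Finset.sum_const, Finset.card_univ, Fintype.card_fin, hm]
    rw [nsmul_eq_mul]
    field_simp
    ring
  have hKd : ∀ k, Kd μ N hN x k = c * (2 * y k - y (k + 1) - y (k - 1)) := by
    intro k
    simp only [Kd, hy]
    ring
  have hsplit : ∑ k, y k * (x k * (x k ^ 2 - 1)) + ∑ k, y k * Kd μ N hN x k = 0 := by
    rw [← Finset.sum_add_distrib]
    calc ∑ k, (y k * (x k * (x k ^ 2 - 1)) + y k * Kd μ N hN x k)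
        = ∑ k, y k * (x k * (x k ^ 2 - 1) + Kd μ N hN x k) :=
          Finset.sum_congr rfl fun k _ => by ring
      _ = 0 := by simp [hx]
  have hA : ∀ k, y k * (m * (m ^ 2 - 1)) - y k ^ 2 ≤ y k * (x k * (x k ^ 2 - 1)) := by
    intro k
    have h1 : y k = x k - m := rfl
    rw [h1]
    nlinarith [mul_nonneg (sq_nonneg (x k - m)) (sq_nonneg (x k + m / 2)),
      mul_nonneg (sq_nonneg (x k - m)) (sq_nonneg m)]
  have hA2 : -∑ k, y k ^ 2 ≤ ∑ k, y k * (x k * (x k ^ 2 - 1)) := by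
    have h := Finset.sum_le_sum (fun k (_ : k ∈ Finset.univ) => hA k)
    rw [Finset.sum_sub_distrib, ← Finset.sum_mul, h0, zero_mul, zero_sub] at h
    exact h
  have hB : ∑ k, y k * Kd μ N hN x k = c * ∑ k, (y k - y (k + 1)) ^ 2 := by
    calc ∑ k, y k * Kd μ N hN x k
        = ∑ k, c * (y k * (2 * y k - y (k + 1) - y (k - 1))) :=
          Finset.sum_congr rfl fun k _ => by rw [hKd k]; ring
      _ = c * ∑ k, y k * (2 * y k - y (k + 1) - y (k - 1)) := by rw [Finset.mul_sum]
      _ = c * ∑ k, (y k - y (k + 1)) ^ 2 := by rw [sum_self_interaction]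
  have hc0 : (0 : ℝ) ≤ c := div_nonneg (by linarith) (by positivity)
  have hWir : μ * ∑ k, y k ^ 2 ≤ c * ∑ k, (y k - y (k + 1)) ^ 2 := by
    rcases eq_or_lt_of_le (Nat.one_le_iff_ne_zero.2 hN) with h1 | h2
    · -- N = 1
      have hy0 : ∀ k : Fin N, y k = 0 := by
        intro k
        have hcard : Fintype.card (Fin N) = 1 := by rw [Fintype.card_fin]; omega
        haveI : Subsingleton (Fin N) := Fintype.card_le_one_iff_subsingleton.1 (le_of_eq hcard)
        have := h0
        rw [Finset.sum_eq_card_nsmul (fun j (_ : j ∈ Finset.univ) =>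
          congrArg y (Subsingleton.elim j k)), Finset.card_univ, hcard, one_nsmul] at this
        exact this
      have hz1 : ∑ k, y k ^ 2 = 0 := Finset.sum_eq_zero fun k _ => by rw [hy0 k]; ring
      have hz2 : ∑ k, (y k - y (k + 1)) ^ 2 = 0 :=
        Finset.sum_eq_zero fun k _ => by rw [hy0 k, hy0 (k + 1)]; ring
      rw [hz1, hz2, mul_zero, mul_zero]
    · -- N ≥ 2
      have hN2 : 2 ≤ N := h2
      have hsin : 0 < Real.sin (π / N) := by
        apply Real.sin_pos_of_pos_of_lt_pi
        · positivity
        · rw [div_lt_iff₀ hNR]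
          have h2N : (2 : ℝ) ≤ N := by exact_mod_cast hN2
          nlinarith [Real.pi_pos]
      have hcμ : c * (4 * Real.sin (π / N) ^ 2) = μ :=
        div_mul_cancel₀ _ (by positivity)
      have hW := wirtinger hN y h0
      calc μ * ∑ k, y k ^ 2 = c * (4 * Real.sin (π / N) ^ 2 * ∑ k, y k ^ 2) := by
            rw [← mul_assoc, hcμ]
        _ ≤ c * ∑ k, (y k - y (k + 1)) ^ 2 := mul_le_mul_of_nonneg_left hW hc0
  have hy2nn : (0 : ℝ) ≤ ∑ k, y k ^ 2 := Finset.sum_nonneg fun k _ => sq_nonneg _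
  have hzero : ∑ k, y k ^ 2 = 0 := by nlinarith [hsplit, hA2, hB, hWir, hy2nn]
  have hy0 : ∀ k, y k = 0 := by
    intro k
    have := (Finset.sum_eq_zero_iff_of_nonneg (fun j (_ : j ∈ Finset.univ) => sq_nonneg (y j))).1
      hzero k (Finset.mem_univ k)
    exact (pow_eq_zero_iff two_ne_zero).1 this
  have hxm : ∀ k, x k = m := by
    intro k
    have := hy0 k
    simp only [hy] at this
    linarith
  obtain ⟨k0⟩ : Nonempty (Fin N) := ⟨0⟩
  have heq0 := hx k0
  rw [hKd k0, hy0 k0, hy0 (k0 + 1), hy0 (k0 - 1), hxm k0] at heq0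
  have hm0 : m * (m ^ 2 - 1) = 0 := by
    have : c * (2 * 0 - 0 - 0) = 0 := by ring
    linarith [heq0, this]
  rcases mul_eq_zero.1 hm0 with h | h
  · right; right; intro k; rw [hxm k, h]
  · have hfac : (m - 1) * (m + 1) = 0 := by linear_combination h
    rcases mul_eq_zero.1 hfac with h' | h'
    · left; intro k; rw [hxm k]; linarith
    · right; left; intro k; rw [hxm k]; linarith


lemma Kd_const (μ : ℝ) (hN : N ≠ 0) (a : ℝ) : Kd μ N hN (fun _ => a) = 0 := by
  haveI : NeZero N := ⟨hN⟩
  funext k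
  simp only [Kd, Pi.zero_apply]
  ring

lemma V_nonneg (μ : ℝ) (hμ : 0 ≤ μ) (hN : N ≠ 0) (x : Fin N → ℝ) : 0 ≤ V μ N hN x := by
  haveI : NeZero N := ⟨hN⟩
  set c : ℝ := μ / (4 * Real.sin (π / N) ^ 2) with hc
  have hc0 : (0 : ℝ) ≤ c := div_nonneg hμ (by positivity)
  have hB : ∑ k, x k * Kd μ N hN x k = c * ∑ k, (x k - x (k + 1)) ^ 2 := by
    calc ∑ k, x k * Kd μ N hN x k
        = ∑ k, c * (x k * (2 * x k - x (k + 1) - x (k - 1))) :=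
          Finset.sum_congr rfl fun k _ => by simp only [Kd]; ring
      _ = c * ∑ k, x k * (2 * x k - x (k + 1) - x (k - 1)) := by rw [Finset.mul_sum]
      _ = c * ∑ k, (x k - x (k + 1)) ^ 2 := by rw [sum_self_interaction]
  rw [V, hB]
  have h1 : (0 : ℝ) ≤ ∑ k, (1 / 4 : ℝ) * (x k ^ 2 - 1) ^ 2 :=
    Finset.sum_nonneg fun k _ => by positivity
  have h2 : (0 : ℝ) ≤ ∑ k, (x k - x (k + 1)) ^ 2 := Finset.sum_nonneg fun k _ => sq_nonneg _
  nlinarith [mul_nonneg hc0 h2]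

lemma V_const_sq_one (μ : ℝ) (hN : N ≠ 0) (a : ℝ) (ha : a ^ 2 = 1) :
    V μ N hN (fun _ => a) = 0 := by
  haveI : NeZero N := ⟨hN⟩
  rw [V, Kd_const μ hN a]
  simp [ha]

end Stmt6Aux

theorem stmt_6 (μ : ℝ) (hμ : 1 < μ) (N : ℕ) (hN : N ≠ 0) :
    ({x : EuclideanSpace ℝ (Fin N) | gradient (fun y : EuclideanSpace ℝ (Fin N) => V μ N hN y) x = 0}
        = {(WithLp.toLp 2 (fun _ => 1) : EuclideanSpace ℝ (Fin N)), WithLp.toLp 2 (fun _ => -1), WithLp.toLp 2 (fun _ => 0)}) ∧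
    (∀ x : EuclideanSpace ℝ (Fin N), V μ N hN (fun _ => 1) ≤ V μ N hN x) ∧
    (∀ x : EuclideanSpace ℝ (Fin N), V μ N hN (fun _ => -1) ≤ V μ N hN x) := by
  haveI : NeZero N := ⟨hN⟩
  have hgrad : ∀ x : EuclideanSpace ℝ (Fin N),
      gradient (fun y : EuclideanSpace ℝ (Fin N) => V μ N hN y) x
        = (WithLp.toLp 2 (fun k => x k * (x k ^ 2 - 1) + Kd μ N hN x k : Fin N → ℝ) :
            EuclideanSpace ℝ (Fin N)) :=
    fun x => (Stmt6Aux.hasGradientAt_V μ hN x).gradient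
  refine ⟨?_, ?_, ?_⟩
  · ext x
    simp only [Set.mem_setOf_eq, Set.mem_insert_iff, Set.mem_singleton_iff]
    constructor
    · intro h
      rw [hgrad x] at h
      have hcomp : ∀ k, x k * (x k ^ 2 - 1) + Kd μ N hN x k = 0 := by
        intro k
        have := congrArg (fun z : EuclideanSpace ℝ (Fin N) => z k) h
        simpa using this
      rcases Stmt6Aux.crit_eq μ hμ hN x hcomp with h1 | h1 | h1
      · left; ext k; exact h1 k
      · right; left; ext k; exact h1 k
      · right; right; ext k; exact h1 k
    · intro h
      have hconst : ∀ a : ℝ, a * (a ^ 2 - 1) = 0 →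
          gradient (fun y : EuclideanSpace ℝ (Fin N) => V μ N hN y)
            (WithLp.toLp 2 (fun _ => a : Fin N → ℝ) : EuclideanSpace ℝ (Fin N)) = 0 := by
        intro a ha
        rw [hgrad]
        ext k
        simp [Stmt6Aux.Kd_const μ hN a, ha]
      rcases h with rfl | rfl | rfl
      · exact hconst 1 (by norm_num)
      · exact hconst (-1) (by norm_num)
      · exact hconst 0 (by norm_num)
  · intro x
    rw [Stmt6Aux.V_const_sq_one μ hN 1 (by norm_num)]
    exact Stmt6Aux.V_nonneg μ (by linarith) hN x
  · intro x
    rw [Stmt6Aux.V_const_sq_one μ hN (-1) (by norm_num)]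
    exact Stmt6Aux.V_nonneg μ (by linarith) hN x
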